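/- Let (V, w) be a d-regular weighted graph with d > 0, all vertices colored red; fix an integer s ≥ 2, add a disjoint blue vertex set V_B with |V_B| = |V|, fix B ⊆ V_B with |B| = s, give every pair of distinct vertices of B weight t = 2d/(s−1), keep the weights w inside V, and give all remaining pairs involving V_B weight 0; call the resulting weighted graph G'. Let 0 < μ ≤ 1/2 and let F be a fair set of vertices of G' with k := |F ∩ V| satisfying 1 ≤ k ≤ 2μs. Then the density of F satisfies D_F ≤ d/2 + d·(k−1)/(s−1) ≤ (1 + 4μ)·d/2. -/

import Mathlib

/-- `W(X)`: sum over ordered pairs of (distinct, since the diagonal weight is 0)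
vertices of `X` of the weight of the pair. -/
noncomputable def pairWeight {α : Type*} (w : α → α → ℝ) (X : Finset α) : ℝ :=
  ∑ i ∈ X, ∑ j ∈ X, w i j

/-- Density of a vertex set `X` in a weighted graph: `D_X = W(X)/|X|`. -/
noncomputable def wdensity {α : Type*} (w : α → α → ℝ) (X : Finset α) : ℝ :=
  pairWeight w X / X.card

/-- soundness case (1): if `F` is fair with `1 ≤ k = |F ∩ V| ≤ 2μs`
(`0 < μ ≤ 1/2`), then `D_F ≤ d/2 + d(k−1)/(s−1) ≤ (1 + 4μ)·d/2`. -/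
theorem sse_soundness_case_12
    {V : Type*} [Fintype V] [DecidableEq V]
    (w : V → V → ℝ) (d : ℝ) (hd : 0 < d)
    (hsymm : ∀ i j, w i j = w j i) (hnonneg : ∀ i j, 0 ≤ w i j)
    (hdiag : ∀ i, w i i = 0)
    (hreg : ∀ i, ∑ j, w i j = d)
    (s : ℕ) (hs2 : 2 ≤ s) (B : Finset V) (hB : B.card = s)
    (t : ℝ) (ht : t = 2 * d / (s - 1))
    -- the weights of G' on V ⊕ V (left = red original copy, right = blue copy):
    (w' : V ⊕ V → V ⊕ V → ℝ)
    (hw' : w' = fun a b =>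
      match a, b with
      | .inl i, .inl j => w i j
      | .inr i, .inr j => if i ∈ B ∧ j ∈ B ∧ i ≠ j then t else 0
      | _, _ => 0)
    -- a fair set F of vertices of G', decomposed into its red and blue parts:
    (Fred Fblue : Finset V) (hfair : Fred.card = Fblue.card)
    (F : Finset (V ⊕ V))
    (hF : F = Fred.map ⟨Sum.inl, Sum.inl_injective⟩ ∪ Fblue.map ⟨Sum.inr, Sum.inr_injective⟩)
    (k : ℕ) (hk : k = Fred.card)
    (μ : ℝ) (hμ0 : 0 < μ) (hμ : μ ≤ 1/2) (hk1 : 1 ≤ k) (hk2 : (k : ℝ) ≤ 2 * μ * s) :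
    wdensity w' F ≤ d / 2 + d * ((k : ℝ) - 1) / ((s : ℝ) - 1) ∧
    d / 2 + d * ((k : ℝ) - 1) / ((s : ℝ) - 1) ≤ (1 + 4 * μ) * d / 2 := by

  have hs : (2:ℝ) ≤ (s:ℝ) := by exact_mod_cast hs2
  have hs1 : (0:ℝ) < (s:ℝ) - 1 := by linarith
  have hk0 : (0:ℝ) < (k:ℝ) := by exact_mod_cast hk1
  have ht0 : 0 ≤ t := by rw [ht]; positivity
  have hcardB : Fblue.card = k := by rw [hk, hfair]
  set A := Fred.map ⟨Sum.inl, Sum.inl_injective (β := V)⟩ with hA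
  set C := Fblue.map ⟨Sum.inr, Sum.inr_injective (α := V)⟩ with hC
  have hdisj : Disjoint A C := by
    rw [Finset.disjoint_left]
    intro x hx hx'
    simp only [hA, hC, Finset.mem_map, Function.Embedding.coeFn_mk] at hx hx'
    obtain ⟨a, _, rfl⟩ := hx
    obtain ⟨b, _, h⟩ := hx'
    exact Sum.inl_ne_inr h.symm
  have hWF : pairWeight w' F =
      pairWeight w Fred +
        ∑ i ∈ Fblue, ∑ j ∈ Fblue, (if i ∈ B ∧ j ∈ B ∧ i ≠ j then t else 0) := by
    subst hw'
    rw [hF, pairWeight, Finset.sum_union hdisj]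
    simp only [Finset.sum_union hdisj]
    simp only [Finset.sum_union hdisj, hA, hC, Finset.sum_map,
      Function.Embedding.coeFn_mk]
    simp [pairWeight]
  have hS1 : pairWeight w Fred ≤ (k:ℝ) * d := by
    have hb : ∀ i ∈ Fred, ∑ j ∈ Fred, w i j ≤ d := by
      intro i _
      rw [← hreg i]
      exact Finset.sum_le_sum_of_subset_of_nonneg (Finset.subset_univ _)
        (fun j _ _ => hnonneg i j)
    calc pairWeight w Fred ≤ ∑ _i ∈ Fred, d := Finset.sum_le_sum hb
      _ = (k:ℝ) * d := by rw [Finset.sum_const, ← hk, nsmul_eq_mul]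
  have hS2 : (∑ i ∈ Fblue, ∑ j ∈ Fblue, (if i ∈ B ∧ j ∈ B ∧ i ≠ j then t else 0))
      ≤ t * (k:ℝ) * ((k:ℝ) - 1) := by
    have step1 : (∑ i ∈ Fblue, ∑ j ∈ Fblue, (if i ∈ B ∧ j ∈ B ∧ i ≠ j then t else 0))
        ≤ ∑ i ∈ Fblue, ∑ j ∈ Fblue, (if i ≠ j then t else 0) := by
      refine Finset.sum_le_sum fun i _ => Finset.sum_le_sum fun j _ => ?_
      split_ifs with h1 h2 h2
      · exact le_refl t
      · exact absurd h1.2.2 h2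
      · exact ht0
      · exact le_refl 0
    have inner : ∀ i ∈ Fblue, (∑ j ∈ Fblue, (if i ≠ j then t else 0)) = t * (k:ℝ) - t := by
      intro i hi
      have hfun : ∀ j, (if i ≠ j then t else 0) = t - (if i = j then t else 0) := by
        intro j; by_cases h : i = j <;> simp [h]
      rw [Finset.sum_congr rfl (fun j _ => hfun j), Finset.sum_sub_distrib,
        Finset.sum_const, Finset.sum_ite_eq, if_pos hi, hcardB, nsmul_eq_mul, mul_comm]
    calc (∑ i ∈ Fblue, ∑ j ∈ Fblue, (if i ∈ B ∧ j ∈ B ∧ i ≠ j then t else 0))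
        ≤ ∑ i ∈ Fblue, ∑ j ∈ Fblue, (if i ≠ j then t else 0) := step1
      _ = ∑ _i ∈ Fblue, (t * (k:ℝ) - t) := Finset.sum_congr rfl inner
      _ = t * (k:ℝ) * ((k:ℝ) - 1) := by
          rw [Finset.sum_const, hcardB, nsmul_eq_mul]; ring
  have hFcard : (F.card : ℝ) = 2 * (k:ℝ) := by
    rw [hF, Finset.card_union_of_disjoint hdisj, Finset.card_map, Finset.card_map,
      ← hk, ← hfair, ← hk]
    push_cast; ring
  constructor
  · rw [wdensity, hFcard]
    have h2k : (0:ℝ) < 2 * (k:ℝ) := by linarith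
    rw [div_le_iff₀ h2k]
    have key : (d / 2 + d * ((k:ℝ) - 1) / ((s:ℝ) - 1)) * (2 * (k:ℝ))
        = (k:ℝ) * d + t * (k:ℝ) * ((k:ℝ) - 1) := by
      rw [ht]; field_simp
    rw [key, hWF]; linarith
  · have h2μ : 2 * μ ≤ 1 := by linarith
    have hkey : d * ((k:ℝ) - 1) / ((s:ℝ) - 1) ≤ 2 * μ * d := by
      rw [div_le_iff₀ hs1]
      nlinarith [mul_le_mul_of_nonneg_left hk2 hd.le]
    linarith
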